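/- Let n_1 ≥ 1 and n_2 ≥ 0. Let μ, μ' ∈ ℝ^{n_1} be nonincreasing vectors, and let ν, ν' ∈ ℝ^{n_2} be nonincreasing vectors with all entries nonnegative. Assume: (i) for every 1 ≤ k ≤ n_1, Σ_{i=1}^k μ_i ≤ Σ_{i=1}^k μ'_i, with equality when k = n_1; and (ii) for every 1 ≤ k ≤ n_2, Σ_{i=1}^k ν_i ≤ Σ_{i=1}^k ν'_i. Let Ξ (respectively Ξ') be the nonincreasing vector in ℝ^{n_1+n_2} whose multiset of entries is {|μ_1|, …, |μ_{n_1}|} ⊎ {ν_1, …, ν_{n_2}} (respectively {|μ'_1|, …, |μ'_{n_1}|} ⊎ {ν'_1, …, ν'_{n_2}}). Then Σ_{i=1}^k Ξ_i ≤ Σ_{i=1}^k Ξ'_i for every 1 ≤ k ≤ n_1+n_2; moreover, if Ξ = Ξ', then μ = μ' and ν = ν'. -/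
import Mathlib


/-- The first `k` entries' partial sum of a vector in `ℝ^n`. -/
def psum {n : ℕ} (v : Fin n → ℝ) (k : ℕ) : ℝ :=
  ∑ i : Fin n, if (i : ℕ) < k then v i else 0

/-- The multiset of entries of a vector in `ℝ^n`. -/
def entries {n : ℕ} (v : Fin n → ℝ) : Multiset ℝ :=
  Finset.univ.val.map v

namespace Comb1

noncomputable def spos {n : ℕ} (v : Fin n → ℝ) (t : ℝ) : ℝ :=
  ∑ i : Fin n, max (v i - t) 0

lemma psum_zero {n} (v : Fin n → ℝ) : psum v 0 = 0 := by simp [psum]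

lemma psum_total {n} (v : Fin n → ℝ) : psum v n = ∑ i, v i :=
  Finset.sum_congr rfl (fun i _ => by simp [i.isLt])

lemma psum_succ {n} (v : Fin n → ℝ) (k : ℕ) (hk : k < n) :
    psum v (k+1) = psum v k + v ⟨k, hk⟩ := by
  unfold psum
  have h : ∀ i : Fin n, (if (i:ℕ) < k+1 then v i else 0)
      = (if (i:ℕ) < k then v i else 0) + (if i = ⟨k, hk⟩ then v i else 0) := by
    intro i
    by_cases he : (i:ℕ) = k
    · have hik : i = ⟨k, hk⟩ := Fin.ext he
      simp [hik]
    · have hne : i ≠ ⟨k, hk⟩ := fun h => he (by rw [h])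
      have hc : ((i:ℕ) < k+1) ↔ ((i:ℕ) < k) := by omega
      simp [hne, hc]
  rw [Finset.sum_congr rfl (fun i _ => h i), Finset.sum_add_distrib,
    Finset.sum_ite_eq' Finset.univ (⟨k, hk⟩ : Fin n) v]
  simp

lemma sum_ite_lt {n : ℕ} (k : ℕ) (hk : k ≤ n) (t : ℝ) :
    (∑ i : Fin n, if (i:ℕ) < k then t else 0) = (k:ℝ) * t := by
  rw [Fin.sum_univ_eq_sum_range (fun j => if j < k then t else 0)]
  rw [← Finset.sum_subset (Finset.range_subset_range.2 hk)
      (fun x _ hx => by simp [Finset.mem_range] at hx ⊢; omega)]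
  rw [Finset.sum_congr rfl (fun x hx => if_pos (Finset.mem_range.1 hx))]
  simp [mul_comm]

lemma psum_le_spos {n} (v : Fin n → ℝ) (t : ℝ) (k : ℕ) (hk : k ≤ n) :
    psum v k ≤ (k:ℝ) * t + spos v t := by
  rw [← sum_ite_lt k hk t]
  unfold psum spos
  rw [← Finset.sum_add_distrib]
  apply Finset.sum_le_sum
  intro i _
  split_ifs
  · have : v i - t ≤ max (v i - t) 0 := le_max_left _ _
    linarith
  · have : (0:ℝ) ≤ max (v i - t) 0 := le_max_right _ _
    linarith

lemma spos_eq_psum {n} (v : Fin n → ℝ) (t : ℝ) (k : ℕ) (hk : k ≤ n)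
    (hlo : ∀ i : Fin n, (i:ℕ) < k → t ≤ v i)
    (hhi : ∀ i : Fin n, k ≤ (i:ℕ) → v i ≤ t) :
    spos v t = psum v k - (k:ℝ) * t := by
  rw [← sum_ite_lt k hk t]
  unfold psum spos
  rw [← Finset.sum_sub_distrib]
  apply Finset.sum_congr rfl
  intro i _
  split_ifs with h
  · exact max_eq_left (by linarith [hlo i h])
  · rw [max_eq_right (by linarith [hhi i (by omega)])]; ring

lemma spos_mono {n} (v v' : Fin n → ℝ) (hv : Antitone v)
    (hps : ∀ k, k ≤ n → psum v k ≤ psum v' k) (t : ℝ) :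
    spos v t ≤ spos v' t := by
  classical
  set s : Finset (Fin n) := Finset.univ.filter (fun i => t < v i) with hs
  set k : ℕ := s.card with hkdef
  have hkn : k ≤ n := by
    have := Finset.card_filter_le Finset.univ (fun i => t < v i)
    simpa [hkdef, hs] using this
  have hiff : ∀ i : Fin n, (i:ℕ) < k ↔ t < v i := by
    intro i
    constructor
    · intro hik
      by_contra h
      push_neg at h
      have hsub : s ⊆ Finset.Iio i := by
        intro j hj
        have hj' : t < v j := by simpa [hs] using (Finset.mem_filter.1 hj).2
        rw [Finset.mem_Iio]
        by_contra hji
        push_neg at hji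
        exact absurd (lt_of_lt_of_le hj' (hv hji)) (not_lt.2 h)
      have := Finset.card_le_card hsub
      rw [Fin.card_Iio] at this
      omega
    · intro hti
      have hsub : Finset.Iic i ⊆ s := by
        intro j hj
        rw [Finset.mem_Iic] at hj
        simp only [hs, Finset.mem_filter, Finset.mem_univ, true_and]
        exact lt_of_lt_of_le hti (hv hj)
      have := Finset.card_le_card hsub
      rw [Fin.card_Iic] at this
      omega
  have h1 : spos v t = psum v k - (k:ℝ) * t := by
    apply spos_eq_psum v t k hkn
    · intro i hi; exact le_of_lt ((hiff i).1 hi)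
    · intro i hi; exact not_lt.1 (fun h => by have := (hiff i).2 h; omega)
  have h2 := psum_le_spos v' t k hkn
  have h3 := hps k hkn
  linarith

lemma antitone_neg_rev {n} (v : Fin n → ℝ) (hv : Antitone v) :
    Antitone (fun i => -v (Fin.rev i)) := by
  intro i j hij
  simp only [neg_le_neg_iff]
  exact hv (Fin.rev_le_rev.2 hij)

lemma spos_neg_rev {n} (v : Fin n → ℝ) (t : ℝ) :
    spos (fun i => -v i) t = spos (fun i => -v (Fin.rev i)) t := by
  unfold spos
  exact Fintype.sum_equiv Fin.revPerm _ _ (fun i => by simp)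

lemma psum_neg_rev {n} (v : Fin n → ℝ) (k : ℕ) (hk : k ≤ n) :
    psum (fun i => -v (Fin.rev i)) k = psum v (n-k) - psum v n := by
  rw [psum_total]
  unfold psum
  have h0 : (∑ i : Fin n, if (i:ℕ) < k then -v (Fin.rev i) else 0)
      = ∑ i : Fin n, if ((Fin.rev i : Fin n):ℕ) < k then -v i else 0 := by
    apply Fintype.sum_equiv Fin.revPerm
    intro i
    simp [Fin.rev_rev]
  rw [h0]
  have h1 : ∀ i : Fin n, (if ((Fin.rev i : Fin n):ℕ) < k then -v i else 0)
      = (if (i:ℕ) < n - k then v i else 0) - v i := by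
    intro i
    have hi := i.isLt
    have hrev : ((Fin.rev i : Fin n):ℕ) = n - (i + 1) := Fin.val_rev i
    by_cases hc : (i:ℕ) < n - k
    · have hc1 : ¬ ((Fin.rev i : Fin n):ℕ) < k := by omega
      rw [if_neg hc1, if_pos hc]; ring
    · have hc1 : ((Fin.rev i : Fin n):ℕ) < k := by omega
      rw [if_pos hc1, if_neg hc]; ring
  rw [Finset.sum_congr rfl (fun i _ => h1 i), Finset.sum_sub_distrib]

lemma entries_map_sum {n} (v : Fin n → ℝ) (f : ℝ → ℝ) :
    ((entries v).map f).sum = ∑ i, f (v i) := by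
  rw [entries, Multiset.map_map]
  rfl

lemma max_abs_split {t : ℝ} (ht : 0 ≤ t) (x : ℝ) :
    max (|x| - t) 0 = max (x - t) 0 + max (-x - t) 0 := by
  rcases le_total 0 x with h|h
  · rw [abs_of_nonneg h, max_eq_right (by linarith : -x - t ≤ 0), add_zero]
  · rw [abs_of_nonpos h, max_eq_right (by linarith : x - t ≤ 0), zero_add]

end Comb1

open Comb1

theorem stmt1 (n₁ n₂ : ℕ) (hn₁ : 1 ≤ n₁)
    (μ μ' : Fin n₁ → ℝ) (ν ν' : Fin n₂ → ℝ)
    (hμ : Antitone μ) (hμ' : Antitone μ')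
    (hν : Antitone ν) (hν' : Antitone ν')
    (hν0 : ∀ i, 0 ≤ ν i) (hν'0 : ∀ i, 0 ≤ ν' i)
    (hμps : ∀ k, 1 ≤ k → k ≤ n₁ → psum μ k ≤ psum μ' k)
    (hμeq : psum μ n₁ = psum μ' n₁)
    (hνps : ∀ k, 1 ≤ k → k ≤ n₂ → psum ν k ≤ psum ν' k)
    (Ξ Ξ' : Fin (n₁ + n₂) → ℝ)
    (hΞmono : Antitone Ξ) (hΞ'mono : Antitone Ξ')
    (hΞ : entries Ξ = entries (fun i => |μ i|) + entries ν)
    (hΞ' : entries Ξ' = entries (fun i => |μ' i|) + entries ν') :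
    (∀ k, 1 ≤ k → k ≤ n₁ + n₂ → psum Ξ k ≤ psum Ξ' k) ∧
      (Ξ = Ξ' → μ = μ' ∧ ν = ν') := by
  classical
  have hμps0 : ∀ k, k ≤ n₁ → psum μ k ≤ psum μ' k := by
    intro k hk
    rcases Nat.eq_zero_or_pos k with rfl|h
    · simp [psum_zero]
    · exact hμps k h hk
  have hνps0 : ∀ k, k ≤ n₂ → psum ν k ≤ psum ν' k := by
    intro k hk
    rcases Nat.eq_zero_or_pos k with rfl|h
    · simp [psum_zero]
    · exact hνps k h hk
  set w : Fin n₁ → ℝ := fun i => -μ (Fin.rev i) with hw_def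
  set w' : Fin n₁ → ℝ := fun i => -μ' (Fin.rev i) with hw'_def
  have hw : Antitone w := antitone_neg_rev μ hμ
  have hw' : Antitone w' := antitone_neg_rev μ' hμ'
  have hwps : ∀ k, k ≤ n₁ → psum w k ≤ psum w' k := by
    intro k hk
    rw [hw_def, hw'_def, psum_neg_rev μ k hk, psum_neg_rev μ' k hk]
    have := hμps0 (n₁ - k) (by omega)
    linarith
  -- decomposition of spos of Ξ, Ξ'
  have hdec : ∀ (Z : Fin (n₁+n₂) → ℝ) (m m'' : Fin n₁ → ℝ) (nn : Fin n₂ → ℝ),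
      entries Z = entries (fun i => |m i|) + entries nn →
      m'' = (fun i => -m (Fin.rev i)) →
      ∀ t, 0 ≤ t → spos Z t = spos m t + spos m'' t + spos nn t := by
    intro Z m m'' nn hZ hm'' t ht
    have h0 : spos Z t = ((entries Z).map (fun x => max (x - t) 0)).sum := by
      unfold spos
      exact (entries_map_sum Z (fun x => max (x - t) 0)).symm
    rw [h0, hZ, Multiset.map_add, Multiset.sum_add, entries_map_sum, entries_map_sum]
    have h1 : ∑ i, max (|m i| - t) 0 = spos m t + spos (fun i => -m i) t := by
      unfold spos
      rw [← Finset.sum_add_distrib]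
      exact Finset.sum_congr rfl (fun i _ => max_abs_split ht _)
    rw [h1, spos_neg_rev, ← hm'']
    rfl
  have hsposΞ := hdec Ξ μ w ν hΞ hw_def
  have hsposΞ' := hdec Ξ' μ' w' ν' hΞ' hw'_def
  have hcomp : ∀ t, 0 ≤ t → spos Ξ t ≤ spos Ξ' t := by
    intro t ht
    rw [hsposΞ t ht, hsposΞ' t ht]
    have h1 := spos_mono μ μ' hμ hμps0 t
    have h2 := spos_mono w w' hw hwps t
    have h3 := spos_mono ν ν' hν hνps0 t
    linarith
  have hΞ'nonneg : ∀ j : Fin (n₁+n₂), 0 ≤ Ξ' j := by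
    intro j
    have hmem : Ξ' j ∈ entries Ξ' := Multiset.mem_map_of_mem _ (Finset.mem_univ_val j)
    rw [hΞ'] at hmem
    rcases Multiset.mem_add.1 hmem with h|h
    · obtain ⟨i, -, he⟩ := Multiset.mem_map.1 h
      rw [← he]; exact abs_nonneg _
    · obtain ⟨i, -, he⟩ := Multiset.mem_map.1 h
      rw [← he]; exact hν'0 i
  constructor
  · intro k hk1 hk2
    set t := Ξ' ⟨k-1, by omega⟩ with ht_def
    have ht : 0 ≤ t := hΞ'nonneg _
    have h1 := psum_le_spos Ξ t k hk2
    have h2 : spos Ξ' t = psum Ξ' k - (k:ℝ) * t := by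
      apply spos_eq_psum Ξ' t k hk2
      · intro i hi
        exact hΞ'mono (show i ≤ ⟨k-1, by omega⟩ from by
          rw [Fin.le_def]; simp; omega)
      · intro i hi
        exact hΞ'mono (show (⟨k-1, by omega⟩ : Fin (n₁+n₂)) ≤ i from by
          rw [Fin.le_def]; simp; omega)
    have h3 := hcomp t ht
    linarith
  · intro hE
    have hparts : ∀ t, 0 ≤ t →
        spos μ t = spos μ' t ∧ spos w t = spos w' t ∧ spos ν t = spos ν' t := by
      intro t ht
      have h0 : spos Ξ t = spos Ξ' t := by rw [hE]
      rw [hsposΞ t ht, hsposΞ' t ht] at h0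
      have h1 := spos_mono μ μ' hμ hμps0 t
      have h2 := spos_mono w w' hw hwps t
      have h3 := spos_mono ν ν' hν hνps0 t
      exact ⟨by linarith, by linarith, by linarith⟩
    have hνpe : ∀ k, k ≤ n₂ → psum ν k = psum ν' k := by
      intro k hk
      rcases Nat.eq_zero_or_pos k with rfl|hk1
      · simp [psum_zero]
      refine le_antisymm (hνps0 k hk) ?_
      set t := ν ⟨k-1, by omega⟩ with ht_def
      have ht : 0 ≤ t := hν0 _
      have h2 : spos ν t = psum ν k - (k:ℝ) * t := by
        apply spos_eq_psum ν t k hk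
        · intro i hi
          exact hν (show i ≤ ⟨k-1, by omega⟩ from by rw [Fin.le_def]; simp; omega)
        · intro i hi
          exact hν (show (⟨k-1, by omega⟩ : Fin n₂) ≤ i from by rw [Fin.le_def]; simp; omega)
      have h3 := psum_le_spos ν' t k hk
      have h4 := (hparts t ht).2.2
      linarith
    have hμpe : ∀ k, k ≤ n₁ → psum μ k = psum μ' k := by
      intro k hk
      rcases Nat.eq_zero_or_pos k with rfl|hk1
      · simp [psum_zero]
      refine le_antisymm (hμps0 k hk) ?_
      rcases le_or_gt 0 (μ ⟨k-1, by omega⟩) with hsg|hsg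
      · set t := μ ⟨k-1, by omega⟩ with ht_def
        have h2 : spos μ t = psum μ k - (k:ℝ) * t := by
          apply spos_eq_psum μ t k hk
          · intro i hi
            exact hμ (show i ≤ ⟨k-1, by omega⟩ from by rw [Fin.le_def]; simp; omega)
          · intro i hi
            exact hμ (show (⟨k-1, by omega⟩ : Fin n₁) ≤ i from by rw [Fin.le_def]; simp; omega)
        have h3 := psum_le_spos μ' t k hk
        have h4 := (hparts t hsg).1
        linarith
      · set t := -μ ⟨k-1, by omega⟩ with ht_def
        have ht : 0 ≤ t := by rw [ht_def]; linarith
        have h2 : spos w t = psum w (n₁-k) - ((n₁-k:ℕ):ℝ) * t := by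
          apply spos_eq_psum w t (n₁-k) (by omega)
          · intro i hi
            rw [hw_def, ht_def]
            simp only [neg_le_neg_iff]
            apply hμ
            rw [Fin.le_def]
            have := Fin.val_rev i
            simp at this ⊢
            omega
          · intro i hi
            rw [hw_def, ht_def]
            simp only [neg_le_neg_iff]
            apply hμ
            rw [Fin.le_def]
            have := Fin.val_rev i
            simp at this ⊢
            omega
        have h3 := psum_le_spos w' t (n₁-k) (by omega)
        have h4 := (hparts t ht).2.1
        have h5 := psum_neg_rev μ (n₁-k) (by omega : n₁ - k ≤ n₁)
        have h6 := psum_neg_rev μ' (n₁-k) (by omega : n₁ - k ≤ n₁)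
        have hk' : n₁ - (n₁ - k) = k := by omega
        rw [hk'] at h5 h6
        rw [← hw_def] at h5
        rw [← hw'_def] at h6
        linarith
    refine ⟨funext fun i => ?_, funext fun i => ?_⟩
    · have h1 := hμpe i (le_of_lt i.isLt)
      have h2 := hμpe (i+1) i.isLt
      have h3 := psum_succ μ i i.isLt
      have h4 := psum_succ μ' i i.isLt
      have h5 : (⟨(i:ℕ), i.isLt⟩ : Fin n₁) = i := rfl
      rw [h5] at h3 h4
      linarith
    · have h1 := hνpe i (le_of_lt i.isLt)
      have h2 := hνpe (i+1) i.isLt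
      have h3 := psum_succ ν i i.isLt
      have h4 := psum_succ ν' i i.isLt
      have h5 : (⟨(i:ℕ), i.isLt⟩ : Fin n₂) = i := rfl
      rw [h5] at h3 h4
      linarith
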